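/- For every prime p ≥ 5, Wolstenholme's congruence holds: ∑_{j=1}^{p-1} 1/j ≡ 0 (mod p²), i.e., p² divides the numerator of the (p-1)-st harmonic number. -/

import Mathlib

private lemma aux_inv_add_inv {n : ℕ} (a b : ZMod n) (ha : IsUnit a) (hb : IsUnit b) :
    a⁻¹ + b⁻¹ = (a + b) * (a * b)⁻¹ := by
  have hab : IsUnit (a * b) := ha.mul hb
  have key : (a⁻¹ + b⁻¹) * (a * b) = ((a + b) * (a * b)⁻¹) * (a * b) := by
    rw [add_mul, ← mul_assoc, ZMod.inv_mul_of_unit a ha, one_mul,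
      show b⁻¹ * (a * b) = b⁻¹ * b * a by ring, ZMod.inv_mul_of_unit b hb, one_mul,
      mul_assoc, ZMod.inv_mul_of_unit _ hab, mul_one, add_comm]
  exact hab.mul_right_cancel key

private lemma aux_hom_inv {n m : ℕ} (h : m ∣ n) (x : ZMod n) (hx : IsUnit x) :
    (ZMod.castHom h (ZMod m)) x⁻¹ = ((ZMod.castHom h (ZMod m)) x)⁻¹ := by
  have h1 : (ZMod.castHom h (ZMod m)) x * (ZMod.castHom h (ZMod m)) x⁻¹ = 1 := by
    rw [← map_mul, mul_comm, ZMod.inv_mul_of_unit _ hx, map_one]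
  exact (ZMod.inv_eq_of_mul_eq_one _ _ _ h1).symm

private lemma aux_sq_inv_sum (p : ℕ) (hp : p.Prime) (h5 : 5 ≤ p) :
    ∑ j ∈ Finset.Icc 1 (p-1), ((j : ZMod p)⁻¹)^2 = 0 := by
  haveI : Fact p.Prime := ⟨hp⟩
  have h0 : ∀ j ∈ Finset.Icc 1 (p-1), (j : ZMod p) ≠ 0 := by
    intro j hj
    simp only [Finset.mem_Icc] at hj
    rw [Ne, ZMod.natCast_eq_zero_iff]
    intro hd
    have := Nat.le_of_dvd (by omega) hd
    omega
  have : ∑ j ∈ Finset.Icc 1 (p-1), ((j : ZMod p)⁻¹)^2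
      = ∑ x ∈ (Finset.univ : Finset (ZMod p)).erase 0, x^2 := by
    refine Finset.sum_nbij' (fun j => ((j : ZMod p))⁻¹) (fun x => (x⁻¹).val) ?_ ?_ ?_ ?_ ?_
    · intro a ha
      simp only [Finset.mem_erase, Finset.mem_univ, and_true]
      exact inv_ne_zero (h0 a ha)
    · intro x hx
      simp only [Finset.mem_erase, Finset.mem_univ, and_true] at hx
      have hxi : x⁻¹ ≠ 0 := inv_ne_zero hx
      have hv : (x⁻¹).val ≠ 0 := fun h => hxi (by rwa [← ZMod.val_eq_zero])
      have hv2 : (x⁻¹).val < p := ZMod.val_lt _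
      simp only [Finset.mem_Icc]; omega
    · intro a ha
      rw [inv_inv, ZMod.val_natCast_of_lt]
      simp only [Finset.mem_Icc] at ha; omega
    · intro x hx
      rw [ZMod.natCast_val, ZMod.cast_id, inv_inv]
    · intro a ha; rfl
  rw [this, Finset.sum_erase _ (by norm_num)]
  apply FiniteField.sum_pow_lt_card_sub_one
  rw [ZMod.card]; omega

private lemma aux_sum_inv_zero (p : ℕ) (hp : p.Prime) (h5 : 5 ≤ p) :
    ∑ j ∈ Finset.Icc 1 (p-1), ((j : ZMod (p^2)))⁻¹ = 0 := by
  haveI : Fact p.Prime := ⟨hp⟩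
  haveI : NeZero (p^2) := ⟨pow_ne_zero 2 hp.pos.ne'⟩
  set R := ZMod (p^2)
  set S := ∑ j ∈ Finset.Icc 1 (p-1), ((j : R))⁻¹ with hS
  set T := ∑ j ∈ Finset.Icc 1 (p-1), ((j : R) * (((p-j : ℕ) : R)))⁻¹ with hT
  have hcop : ∀ j ∈ Finset.Icc 1 (p-1), Nat.Coprime j p := by
    intro j hj; simp only [Finset.mem_Icc] at hj
    refine (hp.coprime_iff_not_dvd.mpr ?_).symm
    intro hd; have := Nat.le_of_dvd (by omega) hd; omega
  have hunit : ∀ j ∈ Finset.Icc 1 (p-1), IsUnit ((j : R)) := fun j hj =>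
    (ZMod.isUnit_iff_coprime j (p^2)).mpr ((hcop j hj).pow_right 2)
  have hmem : ∀ j ∈ Finset.Icc 1 (p-1), p - j ∈ Finset.Icc 1 (p-1) := by
    intro j hj; simp only [Finset.mem_Icc] at *; omega
  -- reflection
  have hrefl : S = ∑ j ∈ Finset.Icc 1 (p-1), (((p-j : ℕ) : R))⁻¹ := by
    refine Finset.sum_nbij' (fun j => p - j) (fun j => p - j) hmem hmem ?_ ?_ ?_
    · intro a ha; simp only [Finset.mem_Icc] at ha; omega
    · intro a ha; simp only [Finset.mem_Icc] at ha; omega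
    · intro a ha; congr 2
      simp only [Finset.mem_Icc] at ha; omega
  -- pairing
  have h2S : (2 : R) * S = (p : R) * T := by
    rw [two_mul]
    nth_rewrite 2 [hrefl]
    rw [hS, ← Finset.sum_add_distrib, hT, Finset.mul_sum]
    refine Finset.sum_congr rfl ?_
    intro j hj
    rw [aux_inv_add_inv _ _ (hunit j hj) (hunit _ (hmem j hj))]
    congr 1
    rw [← Nat.cast_add]
    congr 1
    simp only [Finset.mem_Icc] at hj; omega
  -- T is divisible by p
  have hφT : (ZMod.castHom (dvd_pow_self p two_ne_zero) (ZMod p)) T = 0 := by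
    rw [hT, map_sum]
    have : ∀ j ∈ Finset.Icc 1 (p-1),
        (ZMod.castHom (dvd_pow_self p two_ne_zero) (ZMod p)) ((j : R) * (((p-j : ℕ) : R)))⁻¹
          = -(((j : ZMod p))⁻¹)^2 := by
      intro j hj
      have hj' := hj; simp only [Finset.mem_Icc] at hj'
      rw [aux_hom_inv _ _ ((hunit j hj).mul (hunit _ (hmem j hj))), map_mul,
        map_natCast, map_natCast]
      rw [Nat.cast_sub (by omega), ZMod.natCast_self, zero_sub, mul_neg, ← sq,
        inv_neg, inv_pow]
    rw [Finset.sum_congr rfl this, Finset.sum_neg_distrib,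
      aux_sq_inv_sum p hp h5, neg_zero]
  have hpT : (p : R) * T = 0 := by
    have h2 : ((T.val : ℕ) : ZMod p) = 0 := by
      rw [ZMod.natCast_val]; exact hφT
    obtain ⟨m, hm⟩ := (ZMod.natCast_eq_zero_iff _ _).mp h2
    have hTv : T = ((T.val : ℕ) : R) := by rw [ZMod.natCast_val, ZMod.cast_id]
    rw [hTv, hm, ← Nat.cast_mul, ← mul_assoc, ← sq, Nat.cast_mul,
      ZMod.natCast_self, zero_mul]
  have hu2 : IsUnit (2 : R) := by
    have : IsUnit ((2 : ℕ) : R) := (ZMod.isUnit_iff_coprime 2 (p^2)).mpr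
      (((Nat.coprime_primes Nat.prime_two hp).mpr (by omega)).pow_right 2)
    simpa using this
  have : (2 : R) * S = (2 : R) * 0 := by rw [mul_zero, h2S, hpT]
  exact hu2.mul_left_cancel this

theorem wolstenholme_congruence (p : ℕ) (hp : p.Prime) (h5 : 5 ≤ p) :
    ((p : ℤ))^2 ∣ (∑ j ∈ Finset.Icc 1 (p-1), (1 : ℚ)/j).num := by
  haveI : Fact p.Prime := ⟨hp⟩
  haveI : NeZero (p^2) := ⟨pow_ne_zero 2 hp.pos.ne'⟩
  set H := ∑ j ∈ Finset.Icc 1 (p-1), (1 : ℚ)/j with hH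
  set N := ∑ j ∈ Finset.Icc 1 (p-1), (p-1).factorial / j with hN
  have hdvdf : ∀ j ∈ Finset.Icc 1 (p-1), j ∣ (p-1).factorial := by
    intro j hj; simp only [Finset.mem_Icc] at hj
    exact Nat.dvd_factorial (by omega) hj.2
  -- p² ∣ N
  have hN0 : (N : ZMod (p^2)) = 0 := by
    rw [hN, Nat.cast_sum]
    have : ∀ j ∈ Finset.Icc 1 (p-1),
        (((p-1).factorial / j : ℕ) : ZMod (p^2))
          = ((p-1).factorial : ZMod (p^2)) * ((j : ZMod (p^2)))⁻¹ := by
      intro j hj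
      have hj' := hj; simp only [Finset.mem_Icc] at hj'
      have hu : IsUnit ((j : ZMod (p^2))) := by
        refine (ZMod.isUnit_iff_coprime j (p^2)).mpr (Nat.Coprime.pow_right 2 ?_)
        refine (hp.coprime_iff_not_dvd.mpr ?_).symm
        intro hd; have := Nat.le_of_dvd (by omega) hd; omega
      have hc : (((p-1).factorial / j : ℕ) : ZMod (p^2)) * (j : ZMod (p^2))
          = ((p-1).factorial : ZMod (p^2)) := by
        rw [← Nat.cast_mul, Nat.div_mul_cancel (hdvdf j hj)]
      calc (((p-1).factorial / j : ℕ) : ZMod (p^2))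
          = (((p-1).factorial / j : ℕ) : ZMod (p^2)) * ((j : ZMod (p^2)) * ((j : ZMod (p^2)))⁻¹) := by
            rw [ZMod.mul_inv_of_unit _ hu, mul_one]
        _ = ((p-1).factorial : ZMod (p^2)) * ((j : ZMod (p^2)))⁻¹ := by
            rw [← mul_assoc, hc]
    rw [Finset.sum_congr rfl this, ← Finset.mul_sum, aux_sum_inv_zero p hp h5, mul_zero]
  have hdvdN : (p : ℤ)^2 ∣ (N : ℤ) := by
    have := (ZMod.natCast_eq_zero_iff N (p^2)).mp hN0
    exact_mod_cast Int.natCast_dvd_natCast.mpr this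
  -- N = fact * H in ℚ
  have hQ : (N : ℚ) = ((p-1).factorial : ℚ) * H := by
    rw [hN, Nat.cast_sum, hH, Finset.mul_sum]
    refine Finset.sum_congr rfl ?_
    intro j hj
    have hj' := hj; simp only [Finset.mem_Icc] at hj'
    rw [Nat.cast_div (hdvdf j hj) (by exact_mod_cast (by omega : j ≠ 0)), mul_one_div]
  have hden : (H.den : ℚ) ≠ 0 := by
    exact_mod_cast H.den_nz
  have key : (H.num : ℚ) * ((p-1).factorial : ℚ) = (N : ℚ) * (H.den : ℚ) := by
    rw [hQ, mul_assoc]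
    nth_rewrite 2 [← Rat.num_div_den H]
    rw [div_mul_cancel₀ _ hden, mul_comm]
  have keyZ : H.num * ((p-1).factorial : ℤ) = (N : ℤ) * (H.den : ℤ) := by
    exact_mod_cast key
  have hcop : IsCoprime ((p : ℤ)^2) (((p-1).factorial : ℕ) : ℤ) := by
    rw [Int.isCoprime_iff_gcd_eq_one]
    have : Nat.Coprime (p^2) (p-1).factorial := by
      refine Nat.Coprime.pow_left 2 ?_
      refine hp.coprime_iff_not_dvd.mpr ?_
      rw [hp.dvd_factorial]; omega
    have h2 : ((p : ℤ)^2).gcd (((p-1).factorial : ℕ) : ℤ) = Nat.gcd (p^2) (p-1).factorial := by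
      rw [← Nat.cast_pow, Int.gcd_natCast_natCast]
    rw [h2]; exact this
  refine hcop.dvd_of_dvd_mul_right ?_
  rw [keyZ]
  exact Dvd.dvd.mul_right hdvdN _
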